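/- Let $K$ be a field, $P = K[x_1,\dots,x_n]$, and $I$ a zero-dimensional ideal such that for each $i = 1, \dots, n$ the ideal $I$ contains a squarefree polynomial $g_i(x_i) \in K[x_i]$ with $\gcd(g_i, g_i') = 1$. Then $I$ is a radical ideal. (Seidenberg's Lemma.) -/

import Mathlib

theorem stmt10 {K : Type*} [Field K] {n : ℕ} (I : Ideal (MvPolynomial (Fin n) K))
    [FiniteDimensional K (MvPolynomial (Fin n) K ⧸ I)]
    (g : Fin n → Polynomial K)
    (hmem : ∀ i, Polynomial.aeval (MvPolynomial.X i : MvPolynomial (Fin n) K) (g i) ∈ I)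
    (hsq : ∀ i, Squarefree (g i))
    (hcop : ∀ i, IsCoprime (g i) (Polynomial.derivative (g i))) :
    I.IsRadical := by
  rw [Ideal.isRadical_iff_quotient_reduced]
  set B := MvPolynomial (Fin n) K ⧸ I with hB
  -- The Kähler differential module of B over K is trivial.
  have hD : (KaehlerDifferential.D K B) = 0 := by
    apply Derivation.ext_of_adjoin_eq_top
      (s := Set.range (fun i => Ideal.Quotient.mkₐ K I (MvPolynomial.X i)))
    · have : Set.range (fun i => Ideal.Quotient.mkₐ K I (MvPolynomial.X i))
          = (Ideal.Quotient.mkₐ K I) '' (Set.range MvPolynomial.X) := by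
        rw [← Set.range_comp]; rfl
      rw [this, ← AlgHom.map_adjoin, MvPolynomial.adjoin_range_X, Algebra.map_top,
        AlgHom.range_eq_top]
      exact Ideal.Quotient.mkₐ_surjective K I
    · rintro _ ⟨i, rfl⟩
      set a : B := Ideal.Quotient.mkₐ K I (MvPolynomial.X i) with ha
      have h0 : Polynomial.aeval a (g i) = 0 := by
        rw [ha, Polynomial.aeval_algHom_apply]
        rw [show (Ideal.Quotient.mkₐ K I) (Polynomial.aeval (MvPolynomial.X i) (g i)) =
          Ideal.Quotient.mk I (Polynomial.aeval (MvPolynomial.X i) (g i)) from rfl]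
        exact (Ideal.Quotient.eq_zero_iff_mem).mpr (hmem i)
      have h1 : Polynomial.aeval a (Polynomial.derivative (g i)) •
          (KaehlerDifferential.D K B a) = 0 := by
        rw [← Derivation.map_aeval, h0, map_zero]
      obtain ⟨u, v, huv⟩ := hcop i
      have h2 : Polynomial.aeval a v * Polynomial.aeval a (Polynomial.derivative (g i)) = 1 := by
        have := congrArg (Polynomial.aeval a) huv
        rw [map_add, map_mul, map_mul, h0, mul_zero, zero_add, map_one] at this
        exact this
      have : KaehlerDifferential.D K B a =
          (Polynomial.aeval a v * Polynomial.aeval a (Polynomial.derivative (g i))) •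
            KaehlerDifferential.D K B a := by rw [h2]; exact (one_smul B (KaehlerDifferential.D K B a)).symm
      rw [this, mul_smul (Polynomial.aeval a v) (Polynomial.aeval a (Polynomial.derivative (g i))) (KaehlerDifferential.D K B a), h1, smul_zero]
      simp
  have hsub : Subsingleton (Ω[B⁄K]) := by
    have hspan := KaehlerDifferential.span_range_derivation K B
    rw [hD] at hspan
    have : Submodule.span B (Set.range (0 : Derivation K B (Ω[B⁄K]))) = ⊥ := by
      simp
    rw [show ⇑(0 : Derivation K B (Ω[B⁄K])) = ⇑(0 : Derivation K B (Ω[B⁄K])) from rfl] at hspan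
    rw [this] at hspan
    constructor
    intro x y
    have hx : x ∈ (⊥ : Submodule B (Ω[B⁄K])) := hspan ▸ Submodule.mem_top
    have hy : y ∈ (⊥ : Submodule B (Ω[B⁄K])) := hspan ▸ Submodule.mem_top
    rw [Submodule.mem_bot] at hx hy
    rw [hx, hy]
  have : Algebra.FormallyUnramified K B := ⟨hsub⟩
  exact Algebra.FormallyUnramified.isReduced_of_field K B
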